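/- In the category Gen, composition with the identity arrow is neutral: for any arrow R : n → m, we have 1_m ∗ R = R and R ∗ 1_n = R, where 1_n is the equivalence relation on n + n relating x and y iff x ≡ y (mod n). -/

import Mathlib

/-- `R` is an equivalence relation on the finite ordinal `N` (as a subset of ℕ). -/
def IsEquivOn (R : ℕ → ℕ → Prop) (N : ℕ) : Prop :=
  (∀ x y, R x y → x < N ∧ y < N) ∧ (∀ x, x < N → R x x) ∧
    (∀ x y, R x y → R y x) ∧ (∀ x y z, R x y → R y z → R x z)

/-- The relation `R⁺ᵏ`: shift `R` upwards by `k`. -/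
def shiftRel (R : ℕ → ℕ → Prop) (k : ℕ) : ℕ → ℕ → Prop :=
  fun x y => k ≤ x ∧ k ≤ y ∧ R (x - k) (y - k)

/-- Transitive closure of `R₁ ∪ R₂⁺ⁿ`. -/
def glueRel (n : ℕ) (R₁ R₂ : ℕ → ℕ → Prop) : ℕ → ℕ → Prop :=
  Relation.TransGen (fun a b => R₁ a b ∨ shiftRel R₂ n a b)

/-- Renumbering of the outer blocks `n ∪ kⁿ⁺ᵐ` into `n + k`. -/
def embOuter (n m : ℕ) (x : ℕ) : ℕ := if x < n then x else x + m

/-- Composition `R₂ ∗ R₁` in the category Gen: restrict the transitive closure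
of `R₁ ∪ R₂⁺ⁿ` to the outer blocks and renumber. -/
def genComp (n m k : ℕ) (R₂ R₁ : ℕ → ℕ → Prop) : ℕ → ℕ → Prop :=
  fun x y => x < n + k ∧ y < n + k ∧
    glueRel n R₁ R₂ (embOuter n m x) (embOuter n m y)

/-- The identity arrow `1ₙ` of Gen: `x` and `y` are related iff `x ≡ y (mod n)`. -/
def genId (n : ℕ) : ℕ → ℕ → Prop :=
  fun x y => x < n + n ∧ y < n + n ∧ x % n = y % n

lemma mod_of_between {a m : ℕ} (h1 : m ≤ a) (h2 : a < m + m) : a % m = a - m := by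
  rw [Nat.mod_eq_sub_mod h1, Nat.mod_eq_of_lt (by omega)]

/-- Composition with identity arrows in Gen is neutral. -/
theorem genComp_id (n m : ℕ) (R : ℕ → ℕ → Prop) (h : IsEquivOn R (n + m)) :
    genComp n m m (genId m) R = R ∧ genComp n n m R (genId n) = R := by
  obtain ⟨hdom, hrefl, hsymm, htrans⟩ := h
  constructor
  · -- genComp n m m (genId m) R = R
    funext x y
    apply propext
    set π : ℕ → ℕ := fun a => if a < n + m then a else a - m with hπ
    have hstep : ∀ a b, (R a b ∨ shiftRel (genId m) n a b) → R (π a) (π b) := by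
      rintro a b (hab | ⟨ha, hb, ha2, hb2, hmod⟩)
      · have := hdom a b hab
        simp only [hπ]
        rw [if_pos this.1, if_pos this.2]; exact hab
      · have key : ∀ c, n ≤ c → c - n < m + m → π c = n + (c - n) % m := by
          intro c hc hc2
          simp only [hπ]
          by_cases hcm : c < n + m
          · rw [if_pos hcm, Nat.mod_eq_of_lt (by omega)]; omega
          · rw [if_neg hcm, mod_of_between (by omega) hc2]; omega
        rw [key a ha ha2, key b hb hb2, hmod]
        exact hrefl _ (by have := Nat.mod_lt (b - n) (y := m) (by omega); omega)
    have hkey : ∀ a b, glueRel n R (genId m) a b → R (π a) (π b) := by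
      intro a b hg
      induction hg with
      | single h => exact hstep _ _ h
      | tail _ h ih => exact htrans _ _ _ ih (hstep _ _ h)
    have hπemb : ∀ x, x < n + m → π (embOuter n m x) = x := by
      intro x hx
      simp only [hπ, embOuter]
      split_ifs <;> omega
    constructor
    · rintro ⟨hx, hy, hg⟩
      have := hkey _ _ hg
      rwa [hπemb x hx, hπemb y hy] at this
    · intro hxy
      obtain ⟨hx, hy⟩ := hdom x y hxy
      refine ⟨hx, hy, ?_⟩
      have hsym : Symmetric (fun a b => R a b ∨ shiftRel (genId m) n a b) := by
        rintro a b (hab | ⟨ha, hb, ha2, hb2, hmod⟩)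
        · exact Or.inl (hsymm _ _ hab)
        · exact Or.inr ⟨hb, ha, hb2, ha2, hmod.symm⟩
      have bridge : ∀ z, z < n + m →
          Relation.ReflTransGen (fun a b => R a b ∨ shiftRel (genId m) n a b)
            (embOuter n m z) z := by
        intro z hz
        by_cases hzn : z < n
        · simp only [embOuter, if_pos hzn]
          exact Relation.ReflTransGen.refl
        · have he : embOuter n m z = z + m := by simp [embOuter, hzn]
          rw [he]
          refine Relation.ReflTransGen.single (Or.inr ⟨by omega, by omega, by omega, by omega, ?_⟩)
          have : z + m - n = (z - n) + m := by omega
          rw [this, Nat.add_mod_right]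
      have hmid : glueRel n R (genId m) x y := Relation.TransGen.single (Or.inl hxy)
      exact Relation.TransGen.trans_right (bridge x hx)
        (Relation.TransGen.trans_left hmid
          ((@Relation.ReflTransGen.stdSymm _ _ ⟨hsym⟩).symm _ _ (bridge y hy)))
  · -- genComp n n m R (genId n) = R
    funext x y
    apply propext
    set π : ℕ → ℕ := fun a => if a < n then a + n else a with hπ
    have hstep : ∀ a b, (genId n a b ∨ shiftRel R n a b) → R (π a - n) (π b - n) := by
      rintro a b (⟨ha2, hb2, hmod⟩ | ⟨ha, hb, hab⟩)
      · have key : ∀ c, c < n + n → π c - n = c % n := by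
          intro c hc
          simp only [hπ]
          by_cases hcn : c < n
          · rw [if_pos hcn, Nat.mod_eq_of_lt hcn]; omega
          · rw [if_neg hcn, mod_of_between (by omega) hc]
        rw [key a ha2, key b hb2, hmod]
        exact hrefl _ (by have := Nat.mod_lt b (y := n) (by omega); omega)
      · have hpa : π a = a := by simp only [hπ]; rw [if_neg (by omega)]
        have hpb : π b = b := by simp only [hπ]; rw [if_neg (by omega)]
        rw [hpa, hpb]; exact hab
    have hkey : ∀ a b, glueRel n (genId n) R a b → R (π a - n) (π b - n) := by
      intro a b hg
      induction hg with
      | single h => exact hstep _ _ h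
      | tail _ h ih => exact htrans _ _ _ ih (hstep _ _ h)
    have hπemb : ∀ x, x < n + m → π (embOuter n n x) - n = x := by
      intro x hx
      simp only [hπ, embOuter]
      split_ifs <;> omega
    constructor
    · rintro ⟨hx, hy, hg⟩
      have := hkey _ _ hg
      rwa [hπemb x hx, hπemb y hy] at this
    · intro hxy
      obtain ⟨hx, hy⟩ := hdom x y hxy
      refine ⟨hx, hy, ?_⟩
      have hsym : Symmetric (fun a b => genId n a b ∨ shiftRel R n a b) := by
        rintro a b (⟨ha2, hb2, hmod⟩ | ⟨ha, hb, hab⟩)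
        · exact Or.inl ⟨hb2, ha2, hmod.symm⟩
        · exact Or.inr ⟨hb, ha, hsymm _ _ hab⟩
      have bridge : ∀ z, z < n + m →
          Relation.ReflTransGen (fun a b => genId n a b ∨ shiftRel R n a b)
            (embOuter n n z) (z + n) := by
        intro z hz
        by_cases hzn : z < n
        · simp only [embOuter, if_pos hzn]
          refine Relation.ReflTransGen.single (Or.inl ⟨by omega, by omega, ?_⟩)
          rw [Nat.add_mod_right]
        · have he : embOuter n n z = z + n := by simp [embOuter, hzn]
          rw [he]
      have hmid : glueRel n (genId n) R (x + n) (y + n) :=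
        Relation.TransGen.single (Or.inr ⟨by omega, by omega, by simpa using hxy⟩)
      exact Relation.TransGen.trans_right (bridge x hx)
        (Relation.TransGen.trans_left hmid
          ((@Relation.ReflTransGen.stdSymm _ _ ⟨hsym⟩).symm _ _ (bridge y hy)))
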